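/- Let K_n^{n_1,...,n_k} be the graph consisting of a universal vertex v joined to a disjoint union of cliques of sizes n_1,...,n_k, where n = 1 + Σ n_i and k ≥ 2. Its distance characteristic polynomial is (λ+1)^{n-k-1} · (λ - Σ_{i=1}^k n_i(2λ+1)/(λ+n_i+1)) · ∏_{i=1}^k (λ+n_i+1). -/

import Mathlib

open Polynomial

/-- The distance matrix of the graph consisting of a universal vertex (`none`)
joined to the disjoint union of cliques of sizes `n 0, ..., n (k-1)`
(vertices `some ⟨i, a⟩`). -/
def DKcliques (k : ℕ) (n : Fin k → ℕ) :
    Matrix (Option ((i : Fin k) × Fin (n i))) (Option ((i : Fin k) × Fin (n i))) ℝ :=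
  fun x y =>
    match x, y with
    | none, none => 0
    | none, some _ => 1
    | some _, none => 1
    | some ⟨i, a⟩, some ⟨j, b⟩ =>
        if h : i = j then (if h ▸ a = b then 0 else 1) else 2

namespace AuxKcliques

open Matrix Finset

lemma eval_charpoly' {m : Type*} [Fintype m] [DecidableEq m] (M : Matrix m m ℝ) (r : ℝ) :
    M.charpoly.eval r = (r • (1 : Matrix m m ℝ) - M).det := by
  rw [Matrix.charpoly, ← Polynomial.coe_evalRingHom, RingHom.map_det]
  congr 1
  ext i j
  by_cases h : i = j
  · subst h; simp [Matrix.charmatrix_apply_eq, Matrix.one_apply]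
  · simp [Matrix.charmatrix_apply_ne _ _ _ h, Matrix.one_apply, h]

/-- all-ones matrix -/
def Jm (m : ℕ) : Matrix (Fin m) (Fin m) ℝ := Matrix.of fun _ _ => 1

lemma Jm_mul_Jm (m : ℕ) : Jm m * Jm m = (m : ℝ) • Jm m := by
  ext a b; simp [Jm, Matrix.mul_apply]

lemma block_mul_inv (m : ℕ) (c : ℝ) (hc : c ≠ 0) (hd : c + m ≠ 0) :
    (c • 1 + Jm m) * (c⁻¹ • (1 - (c + m)⁻¹ • Jm m)) = 1 := by
  rw [Matrix.mul_smul, Matrix.add_mul, Matrix.mul_sub, Matrix.mul_sub, Matrix.mul_one,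
    Matrix.mul_one, Matrix.smul_mul, Matrix.one_mul, Matrix.mul_smul, Jm_mul_Jm]
  match_scalars
  all_goals field_simp
  all_goals ring

lemma block_inv_mul (m : ℕ) (c : ℝ) (hc : c ≠ 0) (hd : c + m ≠ 0) :
    (c⁻¹ • (1 - (c + m)⁻¹ • Jm m)) * (c • 1 + Jm m) = 1 := by
  rw [Matrix.smul_mul, Matrix.sub_mul, Matrix.one_mul, Matrix.smul_mul, Matrix.mul_add,
    Matrix.mul_smul, Matrix.mul_one, Jm_mul_Jm]
  match_scalars
  all_goals field_simp
  all_goals ring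

lemma det_block (m : ℕ) (hm : 1 ≤ m) (c : ℝ) (hc : c ≠ 0) :
    (c • 1 + Jm m).det = c ^ (m - 1) * (c + m) := by
  have h2 : c • 1 + Jm m
      = c • (1 + Matrix.replicateCol Unit (fun _ => c⁻¹) * Matrix.replicateRow Unit (fun _ => (1:ℝ))) := by
    rw [smul_add]
    congr 1
    ext a b
    simp [Jm, Matrix.mul_apply, hc]
  rw [h2, Matrix.det_smul, Matrix.det_one_add_replicateCol_mul_replicateRow]
  simp only [dotProduct, Finset.sum_const, Finset.card_univ, Fintype.card_fin, nsmul_eq_mul]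
  have h3 : c ^ m = c ^ (m - 1) * c := by
    conv_lhs => rw [show m = (m-1) + 1 by omega]
    ring
  rw [h3]
  field_simp

lemma rowsum_inv (m : ℕ) (c : ℝ) (hc : c ≠ 0) (hd : c + m ≠ 0) (a : Fin m) :
    ∑ b, (c⁻¹ • ((1 : Matrix (Fin m) (Fin m) ℝ) - (c + m)⁻¹ • Jm m)) a b = (c + m)⁻¹ := by
  simp only [Matrix.smul_apply, Matrix.sub_apply, Matrix.one_apply, Jm, Matrix.of_apply,
    smul_eq_mul]
  rw [← Finset.mul_sum, Finset.sum_sub_distrib, Finset.sum_ite_eq, Finset.sum_const]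
  simp only [Finset.mem_univ, if_true, Finset.card_univ, Fintype.card_fin, nsmul_eq_mul, mul_one]
  field_simp
  ring

lemma det_blockDiagonal'_fin {k : ℕ} {m : Fin k → ℕ} (d : ∀ i, Matrix (Fin (m i)) (Fin (m i)) ℝ) :
    (Matrix.blockDiagonal' d).det = ∏ i, (d i).det := by
  rw [(Matrix.blockTriangular_blockDiagonal' d).det_fintype]
  refine Finset.prod_congr rfl fun i _ => ?_
  let e : {x : (Σ j, Fin (m j)) // x.1 = i} ≃ Fin (m i) :=
    { toFun := fun x => x.2 ▸ x.1.2
      invFun := fun a => ⟨⟨i, a⟩, rfl⟩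
      left_inv := by rintro ⟨⟨j, a⟩, rfl⟩; rfl
      right_inv := fun a => rfl }
  have h : (Matrix.blockDiagonal' d).toSquareBlock Sigma.fst i = (d i).submatrix e e := by
    ext x y
    rcases x with ⟨⟨j, a⟩, hx⟩
    rcases y with ⟨⟨j', b⟩, hy⟩
    dsimp at hx hy
    subst hx; subst hy
    simp [Matrix.toSquareBlock_def, Matrix.blockDiagonal'_apply_eq, e]
  rw [h, Matrix.det_submatrix_equiv_self]

variable {k : ℕ} (n : Fin k → ℕ) (lam : ℝ)

/-- the diagonal blocks of the clique part -/
noncomputable def Bl (i : Fin k) : Matrix (Fin (n i)) (Fin (n i)) ℝ :=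
  (lam + 1) • 1 + Jm (n i)

/-- explicit inverses of the diagonal blocks -/
noncomputable def Binv (i : Fin k) : Matrix (Fin (n i)) (Fin (n i)) ℝ :=
  (lam + 1)⁻¹ • (1 - ((lam + 1) + n i)⁻¹ • Jm (n i))

/-- the clique part of `lam • 1 - D` -/
noncomputable def Dblock : Matrix ((i : Fin k) × Fin (n i)) ((i : Fin k) × Fin (n i)) ℝ :=
  Matrix.blockDiagonal' (Bl n lam) - (2:ℝ) • Matrix.of (fun _ _ => 1)

/-- `lam • 1 - D` as a 2×2 block matrix -/
noncomputable def FB : Matrix (((i : Fin k) × Fin (n i)) ⊕ Unit)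
    (((i : Fin k) × Fin (n i)) ⊕ Unit) ℝ :=
  Matrix.fromBlocks (Dblock n lam) (Matrix.of fun _ _ => -1) (Matrix.of fun _ _ => -1)
    (lam • 1)

lemma key_eq :
    lam • (1 : Matrix (Option ((i : Fin k) × Fin (n i))) _ ℝ) - DKcliques k n
      = (FB n lam).submatrix (Equiv.optionEquivSumPUnit _) (Equiv.optionEquivSumPUnit _) := by
  ext x y
  rcases x with _ | ⟨i, a⟩ <;> rcases y with _ | ⟨j, b⟩
  · simp [DKcliques, FB, Matrix.one_apply]
  · simp [DKcliques, FB]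
  · simp [DKcliques, FB]
  · by_cases h : i = j
    · subst h
      by_cases hab : a = b
      · subst hab
        simp [DKcliques, FB, Dblock, Bl, Jm, Matrix.one_apply, Matrix.blockDiagonal'_apply_eq]
        ring
      · simp [DKcliques, FB, Dblock, Bl, Jm, Matrix.one_apply, hab,
          Matrix.blockDiagonal'_apply_eq]
        ring
    · simp [DKcliques, FB, Dblock, Bl, Jm, Matrix.one_apply, h,
        Matrix.blockDiagonal'_apply_ne _ _ _ h]

lemma det_eval (hn : ∀ i, 1 ≤ n i) (h0 : lam ≠ 0) (h1 : lam + 1 ≠ 0)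
    (hd : ∀ i, lam + n i + 1 ≠ 0) :
    (lam • (1 : Matrix (Option ((i : Fin k) × Fin (n i))) _ ℝ) - DKcliques k n).det
      = (lam + 1) ^ (∑ i, n i - k) *
          (lam * ∏ i, (lam + (n i : ℝ) + 1)
            - (2 * lam + 1) * ∑ i, (n i : ℝ) * ∏ j ∈ univ.erase i, (lam + (n j : ℝ) + 1)) := by
  have hd2 : ∀ i, (lam + 1) + (n i : ℝ) ≠ 0 := by
    intro i hcon; exact hd i (by linarith)
  -- invertibility of the scalar block
  letI : Invertible (lam • (1 : Matrix Unit Unit ℝ)) :=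
    ⟨lam⁻¹ • 1, by rw [Matrix.smul_mul, Matrix.mul_smul, Matrix.one_mul, smul_smul,
        inv_mul_cancel₀ h0, one_smul], by rw [Matrix.smul_mul, Matrix.mul_smul, Matrix.one_mul,
        smul_smul, mul_inv_cancel₀ h0, one_smul]⟩
  have hIA : ⅟(lam • (1 : Matrix Unit Unit ℝ)) = lam⁻¹ • 1 := rfl
  rw [key_eq, Matrix.det_submatrix_equiv_self, FB, Matrix.det_fromBlocks₂₂, hIA]
  -- the Schur complement
  have hS : Dblock n lam - (Matrix.of fun _ _ => (-1:ℝ) :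
        Matrix ((i : Fin k) × Fin (n i)) Unit ℝ) * (lam⁻¹ • (1 : Matrix Unit Unit ℝ)) *
        (Matrix.of fun _ _ => (-1:ℝ) : Matrix Unit ((i : Fin k) × Fin (n i)) ℝ)
      = Matrix.blockDiagonal' (Bl n lam)
        + Matrix.replicateCol Unit (fun _ => -(2 + lam⁻¹)) * Matrix.replicateRow Unit (fun _ => (1:ℝ)) := by
    ext x y
    simp [Dblock, Matrix.mul_apply, Matrix.one_apply, Matrix.smul_apply]
    ring
  rw [hS]
  -- invertibility of the block-diagonal part
  letI : Invertible (Matrix.blockDiagonal' (Bl n lam)) :=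
    ⟨Matrix.blockDiagonal' (Binv n lam), by
      rw [← Matrix.blockDiagonal'_mul, ← Matrix.blockDiagonal'_one]
      exact congrArg _ (funext fun i => block_inv_mul (n i) (lam + 1) h1 (hd2 i)), by
      rw [← Matrix.blockDiagonal'_mul, ← Matrix.blockDiagonal'_one]
      exact congrArg _ (funext fun i => block_mul_inv (n i) (lam + 1) h1 (hd2 i))⟩
  have hIB : ⅟(Matrix.blockDiagonal' (Bl n lam)) = Matrix.blockDiagonal' (Binv n lam) := rfl
  -- rank one update
  have hfact : Matrix.blockDiagonal' (Bl n lam)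
        + Matrix.replicateCol Unit (fun _ => -(2 + lam⁻¹)) * Matrix.replicateRow Unit (fun _ => (1:ℝ))
      = Matrix.blockDiagonal' (Bl n lam) * (1 + ⅟(Matrix.blockDiagonal' (Bl n lam)) *
          (Matrix.replicateCol Unit (fun _ => -(2 + lam⁻¹)) * Matrix.replicateRow Unit (fun _ => (1:ℝ)))) := by
    rw [Matrix.mul_add, Matrix.mul_one, ← Matrix.mul_assoc, mul_invOf_self, Matrix.one_mul]
  rw [hfact, Matrix.det_mul, ← Matrix.mul_assoc, Matrix.det_one_add_mul_comm, hIB]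
  -- the remaining 1×1 determinant
  have hrow : ∀ x : (i : Fin k) × Fin (n i),
      ∑ y, Matrix.blockDiagonal' (Binv n lam) x y = (lam + (n x.1 : ℝ) + 1)⁻¹ := by
    rintro ⟨i, a⟩
    rw [← Finset.univ_sigma_univ, Finset.sum_sigma]
    rw [Finset.sum_eq_single_of_mem i (Finset.mem_univ i)]
    · simp only [Matrix.blockDiagonal'_apply_eq]
      have := rowsum_inv (n i) (lam + 1) h1 (hd2 i) a
      simpa [Binv, show (lam + 1) + (n i : ℝ) = lam + (n i : ℝ) + 1 by ring] using this
    · intro j _ hji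
      apply Finset.sum_eq_zero
      intro b _
      exact Matrix.blockDiagonal'_apply_ne (Binv n lam) _ _ (fun h => hji h.symm)
  have hdet1 : ((1 : Matrix Unit Unit ℝ)
        + Matrix.replicateRow Unit (fun _ : (i : Fin k) × Fin (n i) => (1:ℝ))
          * (Matrix.blockDiagonal' (Binv n lam) *
            Matrix.replicateCol Unit (fun _ : (i : Fin k) × Fin (n i) => -(2 + lam⁻¹)))).det
      = 1 - (2 + lam⁻¹) * ∑ i, (n i : ℝ) * (lam + (n i : ℝ) + 1)⁻¹ := by
    rw [Matrix.det_unique]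
    simp only [Matrix.add_apply, Matrix.one_apply_eq, Matrix.mul_apply, Matrix.replicateRow_apply,
      Matrix.replicateCol_apply, one_mul]
    have : ∀ x : (i : Fin k) × Fin (n i),
        (∑ y, Matrix.blockDiagonal' (Binv n lam) x y * -(2 + lam⁻¹))
          = -(2 + lam⁻¹) * (lam + (n x.1 : ℝ) + 1)⁻¹ := by
      intro x
      rw [← Finset.sum_mul, hrow x]
      ring
    rw [Finset.sum_congr rfl (fun x _ => this x)]
    rw [← Finset.univ_sigma_univ, Finset.sum_sigma]
    simp only [Finset.sum_const, Finset.card_univ, Fintype.card_fin, nsmul_eq_mul]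
    have h9 : ∀ x : Fin k, (n x : ℝ) * (-(2 + lam⁻¹) * (lam + (n x : ℝ) + 1)⁻¹)
        = -((2 + lam⁻¹) * ((n x : ℝ) * (lam + (n x : ℝ) + 1)⁻¹)) := fun x => by ring
    rw [Finset.sum_congr rfl fun x _ => h9 x, Finset.sum_neg_distrib, Finset.mul_sum,
      sub_eq_add_neg]
  rw [hdet1]
  -- determinant of the block diagonal part
  have hdetBD : (Matrix.blockDiagonal' (Bl n lam)).det
      = (lam + 1) ^ (∑ i, n i - k) * ∏ i, (lam + (n i : ℝ) + 1) := by
    rw [det_blockDiagonal'_fin]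
    have : ∀ i, (Bl n lam i).det = (lam + 1) ^ (n i - 1) * (lam + (n i : ℝ) + 1) := by
      intro i
      rw [Bl, det_block (n i) (hn i) (lam + 1) h1]
      ring_nf
    rw [Finset.prod_congr rfl fun i _ => this i, Finset.prod_mul_distrib,
      Finset.prod_pow_eq_pow_sum]
    congr 2
    have hsum : ∑ i, (n i - 1) = ∑ i, n i - ∑ i : Fin k, 1 :=
      Finset.sum_tsub_distrib Finset.univ fun i _ => hn i
    simp only [Finset.sum_const, Finset.card_univ, Fintype.card_fin, smul_eq_mul, mul_one] at hsum
    omega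
  -- determinant of the scalar block
  have hdetA : (lam • (1 : Matrix Unit Unit ℝ)).det = lam := by
    rw [Matrix.det_unique]
    simp
  rw [hdetA, hdetBD]
  -- final scalar computation
  have hsP : (∑ i, (n i : ℝ) * (lam + (n i : ℝ) + 1)⁻¹) * ∏ i, (lam + (n i : ℝ) + 1)
      = ∑ i, (n i : ℝ) * ∏ j ∈ univ.erase i, (lam + (n j : ℝ) + 1) := by
    rw [Finset.sum_mul]
    refine Finset.sum_congr rfl fun i _ => ?_
    rw [← Finset.mul_prod_erase Finset.univ _ (Finset.mem_univ i)]
    field_simp [hd i]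
  rw [← hsP]
  field_simp

end AuxKcliques

open AuxKcliques Matrix Finset in
/-- the explicit characteristic polynomial -/
noncomputable def Gpoly (k : ℕ) (n : Fin k → ℕ) (E : ℕ) : ℝ[X] :=
  (X + 1) ^ E * ((X : ℝ[X]) * ∏ i, (X + C (n i : ℝ) + 1)
    - (2 * X + 1) * ∑ i, C (n i : ℝ) * ∏ j ∈ Finset.univ.erase i, (X + C (n j : ℝ) + 1))

open AuxKcliques Matrix Finset in
lemma Gpoly_eval (k : ℕ) (n : Fin k → ℕ) (E : ℕ) (lam : ℝ) :
    (Gpoly k n E).eval lam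
      = (lam + 1) ^ E * (lam * ∏ i, (lam + (n i : ℝ) + 1)
        - (2 * lam + 1) * ∑ i, (n i : ℝ) * ∏ j ∈ Finset.univ.erase i, (lam + (n j : ℝ) + 1)) := by
  simp [Gpoly, eval_prod, eval_finset_sum]

theorem charpoly_universal_vertex_cliques {k : ℕ} (hk : 2 ≤ k)
    (n : Fin k → ℕ) (hn : ∀ i, 1 ≤ n i) {N : ℕ} (hN : N = 1 + ∑ i, n i) :
    ∀ lam : ℝ, (∀ i, lam + n i + 1 ≠ 0) →
      ((DKcliques k n).charpoly).eval lam
        = (lam + 1) ^ (N - k - 1)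
            * (lam - ∑ i, (n i : ℝ) * (2 * lam + 1) / (lam + n i + 1))
            * ∏ i, (lam + n i + 1) := by
  intro lam hlam
  have hE : N - k - 1 = ∑ i, n i - k := by omega
  have hpoly : (DKcliques k n).charpoly = Gpoly k n (∑ i, n i - k) := by
    apply Polynomial.eq_of_infinite_eval_eq
    have hfin : (({0, -1} ∪ Set.range (fun i : Fin k => -((n i : ℝ) + 1))) : Set ℝ).Finite :=
      ((Set.finite_singleton (-1:ℝ)).insert 0).union (Set.finite_range _)
    refine Set.Infinite.mono ?_ hfin.infinite_compl
    intro x hx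
    simp only [Set.mem_compl_iff, Set.mem_union, Set.mem_insert_iff, Set.mem_singleton_iff,
      Set.mem_range, not_or, not_exists] at hx
    obtain ⟨⟨hx0, hx1⟩, hx2⟩ := hx
    have hx1' : x + 1 ≠ 0 := fun h => hx1 (by linarith)
    have hx2' : ∀ i, x + n i + 1 ≠ 0 := by
      intro i h
      exact hx2 i (by linarith)
    show (DKcliques k n).charpoly.eval x = (Gpoly k n (∑ i, n i - k)).eval x
    rw [AuxKcliques.eval_charpoly', AuxKcliques.det_eval n x hn hx0 hx1' hx2', Gpoly_eval]
  rw [hpoly, Gpoly_eval, hE]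
  have hsP : (∑ i, (n i : ℝ) * (2 * lam + 1) / (lam + (n i : ℝ) + 1))
        * ∏ i, (lam + (n i : ℝ) + 1)
      = (2 * lam + 1) * ∑ i, (n i : ℝ) * ∏ j ∈ Finset.univ.erase i, (lam + (n j : ℝ) + 1) := by
    rw [Finset.sum_mul, Finset.mul_sum]
    refine Finset.sum_congr rfl fun i _ => ?_
    rw [← Finset.mul_prod_erase Finset.univ _ (Finset.mem_univ i)]
    field_simp [hlam i]
  have expand : (lam - ∑ i, (n i : ℝ) * (2 * lam + 1) / (lam + (n i : ℝ) + 1))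
        * ∏ i, (lam + (n i : ℝ) + 1)
      = lam * ∏ i, (lam + (n i : ℝ) + 1)
        - (2 * lam + 1) * ∑ i, (n i : ℝ) * ∏ j ∈ Finset.univ.erase i, (lam + (n j : ℝ) + 1) := by
    rw [sub_mul, hsP]
  rw [mul_assoc, expand]
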